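/- arXiv:2506.09871 — 2 statements merged into one kernel-verified Lean document; each statement's English description precedes it below -/
import Mathlib

section
/- Let 𝒴 ⊂ ℝ be a finite set, let 𝒜, 𝒢₁, 𝒢₂, ℬ₂ be finite types, let p be a strictly positive probability mass function on 𝒴 × 𝒜 × 𝒢₁ × 𝒢₂ × ℬ₂, and fix a ∈ 𝒜. If Y ⊥ B₂ | (A, G₁, G₂) under p, then for all (y, a′, g₁, g₂): ∑_{b₂} p(b₂ | Y=y, A=a′, G₁=g₁, G₂=g₂) · ψ_a^{G₁,(G₂,B₂)}(y,a′,g₁,g₂,b₂) = ψ_a^{G₁,G₂}(y,a′,g₁,g₂); that is, the conditional expectation of the influence function for the adjustment set (G₁,(G₂,B₂)) given (Y,A,G₁,G₂) equals the influence function for the adjustment set (G₁,G₂). -/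
open Finset

noncomputable section

variable {Y : Finset ℝ} {A G₁ G₂ B₂ : Type}
variable [Fintype A] [Fintype G₁] [Fintype G₂] [Fintype B₂] [DecidableEq A]

/-- Marginal `p(g₁)`. -/
def pG1 (p : Y × A × G₁ × G₂ × B₂ → ℝ) (g₁ : G₁) : ℝ :=
  ∑ y : Y, ∑ a : A, ∑ g₂ : G₂, ∑ b₂ : B₂, p (y, a, g₁, g₂, b₂)

/-- Marginal `p(g₂)`. -/
def pG2 (p : Y × A × G₁ × G₂ × B₂ → ℝ) (g₂ : G₂) : ℝ :=
  ∑ y : Y, ∑ a : A, ∑ g₁ : G₁, ∑ b₂ : B₂, p (y, a, g₁, g₂, b₂)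

/-- Marginal `p(b₂)`. -/
def pB2 (p : Y × A × G₁ × G₂ × B₂ → ℝ) (b₂ : B₂) : ℝ :=
  ∑ y : Y, ∑ a : A, ∑ g₁ : G₁, ∑ g₂ : G₂, p (y, a, g₁, g₂, b₂)

/-- Marginal `p(g₂, b₂)`. -/
def pG2B2 (p : Y × A × G₁ × G₂ × B₂ → ℝ) (g₂ : G₂) (b₂ : B₂) : ℝ :=
  ∑ y : Y, ∑ a : A, ∑ g₁ : G₁, p (y, a, g₁, g₂, b₂)

/-- Marginal `p(a, g₁, b₂)`. -/
def pAG1B2 (p : Y × A × G₁ × G₂ × B₂ → ℝ) (a : A) (g₁ : G₁) (b₂ : B₂) : ℝ :=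
  ∑ y : Y, ∑ g₂ : G₂, p (y, a, g₁, g₂, b₂)

/-- Marginal `p(a, g₁, g₂, b₂)`. -/
def pAG1G2B2 (p : Y × A × G₁ × G₂ × B₂ → ℝ) (a : A) (g₁ : G₁) (g₂ : G₂) (b₂ : B₂) : ℝ :=
  ∑ y : Y, p (y, a, g₁, g₂, b₂)

/-- Marginal `p(a, g₁, g₂)`. -/
def pAG1G2 (p : Y × A × G₁ × G₂ × B₂ → ℝ) (a : A) (g₁ : G₁) (g₂ : G₂) : ℝ :=
  ∑ y : Y, ∑ b₂ : B₂, p (y, a, g₁, g₂, b₂)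

/-- Outcome regression `m₁(g₁,b₂) = ∑_y y·p(y | a, g₁, b₂)` for the
adjustment set `(G₁, B₂)`. -/
def m1 (p : Y × A × G₁ × G₂ × B₂ → ℝ) (a : A) (g₁ : G₁) (b₂ : B₂) : ℝ :=
  ∑ y : Y, (y : ℝ) * ((∑ g₂ : G₂, p (y, a, g₁, g₂, b₂)) / pAG1B2 p a g₁ b₂)

/-- Outcome regression `m₂(g₁,g₂,b₂) = ∑_y y·p(y | a, g₁, g₂, b₂)` for the
adjustment set `(G₁, (G₂, B₂))`. -/
def m2 (p : Y × A × G₁ × G₂ × B₂ → ℝ) (a : A) (g₁ : G₁) (g₂ : G₂) (b₂ : B₂) : ℝ :=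
  ∑ y : Y, (y : ℝ) * (p (y, a, g₁, g₂, b₂) / pAG1G2B2 p a g₁ g₂ b₂)

/-- Outcome regression `m₃(g₁,g₂) = ∑_y y·p(y | a, g₁, g₂)` for the
adjustment set `(G₁, G₂)`. -/
def m3 (p : Y × A × G₁ × G₂ × B₂ → ℝ) (a : A) (g₁ : G₁) (g₂ : G₂) : ℝ :=
  ∑ y : Y, (y : ℝ) * ((∑ b₂ : B₂, p (y, a, g₁, g₂, b₂)) / pAG1G2 p a g₁ g₂)

/-- Target parameter for the adjustment set `(G₁, B₂)`. -/
def T1 (p : Y × A × G₁ × G₂ × B₂ → ℝ) (a : A) : ℝ :=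
  ∑ g₁ : G₁, pG1 p g₁ * ∑ b₂ : B₂, pB2 p b₂ * m1 p a g₁ b₂

/-- Target parameter for the adjustment set `(G₁, (G₂, B₂))`. -/
def T2 (p : Y × A × G₁ × G₂ × B₂ → ℝ) (a : A) : ℝ :=
  ∑ g₁ : G₁, pG1 p g₁ * ∑ g₂ : G₂, ∑ b₂ : B₂, pG2B2 p g₂ b₂ * m2 p a g₁ g₂ b₂

/-- Target parameter for the adjustment set `(G₁, G₂)`. -/
def T3 (p : Y × A × G₁ × G₂ × B₂ → ℝ) (a : A) : ℝ :=
  ∑ g₁ : G₁, pG1 p g₁ * ∑ g₂ : G₂, pG2 p g₂ * m3 p a g₁ g₂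

/-- Influence function `ψ_a^{G₁,B₂}` for the adjustment set `(G₁, B₂)`. -/
def psi1 (p : Y × A × G₁ × G₂ × B₂ → ℝ) (a : A)
    (y : Y) (a' : A) (g₁ : G₁) (b₂ : B₂) : ℝ :=
  (if a' = a then (1 : ℝ) else 0) * (pG1 p g₁ * pB2 p b₂ / pAG1B2 p a g₁ b₂) *
      ((y : ℝ) - m1 p a g₁ b₂)
    + (∑ b₂' : B₂, pB2 p b₂' * m1 p a g₁ b₂')
    + (∑ g₁' : G₁, pG1 p g₁' * m1 p a g₁' b₂)
    - 2 * T1 p a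

/-- Influence function `ψ_a^{G₁,(G₂,B₂)}` for the adjustment set `(G₁, (G₂, B₂))`. -/
def psi2 (p : Y × A × G₁ × G₂ × B₂ → ℝ) (a : A)
    (y : Y) (a' : A) (g₁ : G₁) (g₂ : G₂) (b₂ : B₂) : ℝ :=
  (if a' = a then (1 : ℝ) else 0) *
      (pG1 p g₁ * pG2B2 p g₂ b₂ / pAG1G2B2 p a g₁ g₂ b₂) *
      ((y : ℝ) - m2 p a g₁ g₂ b₂)
    + (∑ g₂' : G₂, ∑ b₂' : B₂, pG2B2 p g₂' b₂' * m2 p a g₁ g₂' b₂')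
    + (∑ g₁' : G₁, pG1 p g₁' * m2 p a g₁' g₂ b₂)
    - 2 * T2 p a

/-- Influence function `ψ_a^{G₁,G₂}` for the adjustment set `(G₁, G₂)`. -/
def psi3 (p : Y × A × G₁ × G₂ × B₂ → ℝ) (a : A)
    (y : Y) (a' : A) (g₁ : G₁) (g₂ : G₂) : ℝ :=
  (if a' = a then (1 : ℝ) else 0) * (pG1 p g₁ * pG2 p g₂ / pAG1G2 p a g₁ g₂) *
      ((y : ℝ) - m3 p a g₁ g₂)
    + (∑ g₂' : G₂, pG2 p g₂' * m3 p a g₁ g₂')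
    + (∑ g₁' : G₁, pG1 p g₁' * m3 p a g₁' g₂)
    - 2 * T3 p a

/-- Conditional independence `G₂ ⊥ (A, G₁) | B₂` under `p`. -/
def CI_G2_AG1_B2 (p : Y × A × G₁ × G₂ × B₂ → ℝ) : Prop :=
  ∀ (g₂ : G₂) (a : A) (g₁ : G₁) (b₂ : B₂),
    (∑ y : Y, p (y, a, g₁, g₂, b₂)) / pB2 p b₂ =
      (pG2B2 p g₂ b₂ / pB2 p b₂) * (pAG1B2 p a g₁ b₂ / pB2 p b₂)

/-- Conditional independence `Y ⊥ B₂ | (A, G₁, G₂)` under `p`. -/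
def CI_Y_B2_AG1G2 (p : Y × A × G₁ × G₂ × B₂ → ℝ) : Prop :=
  ∀ (y : Y) (a : A) (g₁ : G₁) (g₂ : G₂) (b₂ : B₂),
    p (y, a, g₁, g₂, b₂) / pAG1G2 p a g₁ g₂ =
      ((∑ b₂' : B₂, p (y, a, g₁, g₂, b₂')) / pAG1G2 p a g₁ g₂) *
        (pAG1G2B2 p a g₁ g₂ b₂ / pAG1G2 p a g₁ g₂)

/-- Variance of a real function of the observation under `p`. -/
def VarP (p : Y × A × G₁ × G₂ × B₂ → ℝ) (f : Y × A × G₁ × G₂ × B₂ → ℝ) : ℝ :=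
  (∑ o : Y × A × G₁ × G₂ × B₂, p o * f o ^ 2) -
    (∑ o : Y × A × G₁ × G₂ × B₂, p o * f o) ^ 2

/-- Projection identity in the proof of Lemma 4.2 (deletion of
overadjustment backdoor variables): under `Y ⊥ B₂ | (A, G₁, G₂)`, the
conditional expectation of `ψ_a^{G₁,(G₂,B₂)}` given `(Y, A, G₁, G₂)`
equals `ψ_a^{G₁,G₂}`. -/
theorem psi_projection
    (p : Y × A × G₁ × G₂ × B₂ → ℝ)
    (hpos : ∀ o, 0 < p o) (hsum : ∑ o, p o = 1) (a : A)
    (hCI : CI_Y_B2_AG1G2 p) :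
    ∀ (y : Y) (a' : A) (g₁ : G₁) (g₂ : G₂),
      ∑ b₂ : B₂,
        (p (y, a', g₁, g₂, b₂) / (∑ b₂' : B₂, p (y, a', g₁, g₂, b₂'))) *
          psi2 p a y a' g₁ g₂ b₂ =
        psi3 p a y a' g₁ g₂ := by
  intro y a' g₁ g₂
  -- B₂ is nonempty
  have hB : Nonempty B₂ := by
    by_contra h
    rw [not_nonempty_iff] at h
    simp [Finset.univ_eq_empty] at hsum
  have hY : Nonempty Y := ⟨y⟩
  -- positivity of marginals
  have hposS : ∀ (y' : Y) (a'' : A) (g₁' : G₁) (g₂' : G₂),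
      0 < ∑ b₂ : B₂, p (y', a'', g₁', g₂', b₂) :=
    fun y' a'' g₁' g₂' =>
      Finset.sum_pos (fun _ _ => hpos _) Finset.univ_nonempty
  have hposAG1G2B2 : ∀ (a'' : A) (g₁' : G₁) (g₂' : G₂) (b₂ : B₂),
      0 < pAG1G2B2 p a'' g₁' g₂' b₂ :=
    fun a'' g₁' g₂' b₂ =>
      Finset.sum_pos (fun _ _ => hpos _) Finset.univ_nonempty
  have hposAG1G2 : ∀ (a'' : A) (g₁' : G₁) (g₂' : G₂),
      0 < pAG1G2 p a'' g₁' g₂' :=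
    fun a'' g₁' g₂' =>
      Finset.sum_pos (fun _ _ => hposS _ _ _ _) Finset.univ_nonempty
  -- key consequence of conditional independence
  have key : ∀ (y' : Y) (g₁' : G₁) (g₂' : G₂) (b₂ : B₂),
      p (y', a, g₁', g₂', b₂) * pAG1G2 p a g₁' g₂' =
        (∑ b₂' : B₂, p (y', a, g₁', g₂', b₂')) * pAG1G2B2 p a g₁' g₂' b₂ := by
    intro y' g₁' g₂' b₂
    have h := hCI y' a g₁' g₂' b₂
    have hne := (hposAG1G2 a g₁' g₂').ne'
    field_simp at h
    exact h
  -- m2 equals m3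
  have hm2 : ∀ (g₁' : G₁) (g₂' : G₂) (b₂ : B₂),
      m2 p a g₁' g₂' b₂ = m3 p a g₁' g₂' := by
    intro g₁' g₂' b₂
    unfold m2 m3
    refine Finset.sum_congr rfl fun y' _ => ?_
    congr 1
    rw [div_eq_div_iff (hposAG1G2B2 a g₁' g₂' b₂).ne' (hposAG1G2 a g₁' g₂').ne']
    have := key y' g₁' g₂' b₂
    unfold pAG1G2 at this ⊢
    linarith [this]
  -- marginalizing pG2B2 over b₂ gives pG2
  have hsplit : ∀ g₂' : G₂, ∑ b₂ : B₂, pG2B2 p g₂' b₂ = pG2 p g₂' := by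
    intro g₂'
    unfold pG2B2 pG2
    rw [Finset.sum_comm]
    refine Finset.sum_congr rfl fun y' _ => ?_
    rw [Finset.sum_comm]
    refine Finset.sum_congr rfl fun a'' _ => ?_
    rw [Finset.sum_comm]
  -- T2 equals T3
  have hT2 : T2 p a = T3 p a := by
    unfold T2 T3
    refine Finset.sum_congr rfl fun g₁' _ => ?_
    congr 1
    refine Finset.sum_congr rfl fun g₂' _ => ?_
    simp only [hm2]
    rw [← Finset.sum_mul, hsplit]
  -- the double sum in psi2 equals the single sum in psi3
  have hDD : ∀ g₁' : G₁,
      (∑ g₂' : G₂, ∑ b₂' : B₂, pG2B2 p g₂' b₂' * m3 p a g₁' g₂')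
        = ∑ g₂' : G₂, pG2 p g₂' * m3 p a g₁' g₂' := by
    intro g₁'
    refine Finset.sum_congr rfl fun g₂' _ => ?_
    rw [← Finset.sum_mul, hsplit]
  -- abbreviations
  set S : ℝ := ∑ b₂' : B₂, p (y, a', g₁, g₂, b₂') with hS
  have hSpos : 0 < S := hposS y a' g₁ g₂
  have hq1 : ∑ b₂ : B₂, p (y, a', g₁, g₂, b₂) / S = 1 := by
    rw [← Finset.sum_div, ← hS, div_self hSpos.ne']
  simp only [psi2, psi3, hm2, hT2, hDD]
  set C : ℝ := (∑ g₂' : G₂, pG2 p g₂' * m3 p a g₁ g₂')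
      + (∑ g₁' : G₁, pG1 p g₁' * m3 p a g₁' g₂) - 2 * T3 p a with hC
  have hrw : ∀ b₂ : B₂,
      p (y, a', g₁, g₂, b₂) / S *
        ((if a' = a then (1:ℝ) else 0) *
            (pG1 p g₁ * pG2B2 p g₂ b₂ / pAG1G2B2 p a g₁ g₂ b₂) *
            ((y : ℝ) - m3 p a g₁ g₂)
          + (∑ g₂' : G₂, pG2 p g₂' * m3 p a g₁ g₂')
          + (∑ g₁' : G₁, pG1 p g₁' * m3 p a g₁' g₂) - 2 * T3 p a)
      = p (y, a', g₁, g₂, b₂) / S *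
          ((if a' = a then (1:ℝ) else 0) *
            (pG1 p g₁ * pG2B2 p g₂ b₂ / pAG1G2B2 p a g₁ g₂ b₂) *
            ((y : ℝ) - m3 p a g₁ g₂))
        + p (y, a', g₁, g₂, b₂) / S * C := by
    intro b₂; rw [hC]; ring
  rw [Finset.sum_congr rfl fun b₂ _ => hrw b₂, Finset.sum_add_distrib,
    ← Finset.sum_mul, hq1, one_mul]
  have hmain : ∑ b₂ : B₂,
      p (y, a', g₁, g₂, b₂) / S *
        ((if a' = a then (1:ℝ) else 0) *
          (pG1 p g₁ * pG2B2 p g₂ b₂ / pAG1G2B2 p a g₁ g₂ b₂) *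
          ((y : ℝ) - m3 p a g₁ g₂))
      = (if a' = a then (1:ℝ) else 0) *
          (pG1 p g₁ * pG2 p g₂ / pAG1G2 p a g₁ g₂) *
          ((y : ℝ) - m3 p a g₁ g₂) := by
    by_cases ha : a' = a
    · subst ha
      simp only [eq_self_iff_true, if_true, one_mul]
      have hterm : ∀ b₂ : B₂,
          p (y, a', g₁, g₂, b₂) / S *
            (pG1 p g₁ * pG2B2 p g₂ b₂ / pAG1G2B2 p a' g₁ g₂ b₂ *
              ((y : ℝ) - m3 p a' g₁ g₂))
          = pG1 p g₁ / pAG1G2 p a' g₁ g₂ * ((y : ℝ) - m3 p a' g₁ g₂) *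
              pG2B2 p g₂ b₂ := by
        intro b₂
        have hk := key y g₁ g₂ b₂
        rw [← hS] at hk
        have h1 := (hposAG1G2B2 a' g₁ g₂ b₂).ne'
        have h2 := (hposAG1G2 a' g₁ g₂).ne'
        field_simp
        linear_combination pG1 p g₁ * pG2B2 p g₂ b₂ * ((y : ℝ) - m3 p a' g₁ g₂) * hk
      rw [Finset.sum_congr rfl fun b₂ _ => hterm b₂, ← Finset.mul_sum, hsplit]
      ring
    · simp [ha]
  rw [hmain, hC]
  ring

end
end

section
/- Let 𝒴 ⊂ ℝ be a finite set, let 𝒜, 𝒢₁, 𝒢₂, ℬ₂ be finite types, let p be a strictly positive probability mass function on 𝒴 × 𝒜 × 𝒢₁ × 𝒢₂ × ℬ₂, and fix a ∈ 𝒜. If Y ⊥ B₂ | (A, G₁, G₂) under p, then Var_p( ψ_a^{G₁,(G₂,B₂)}(Y,A,G₁,G₂,B₂) ) ≥ Var_p( ψ_a^{G₁,G₂}(Y,A,G₁,G₂) ). -/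
open Finset

noncomputable section

variable {Y : Finset ℝ} {A G₁ G₂ B₂ : Type}
variable [Fintype A] [Fintype G₁] [Fintype G₂] [Fintype B₂] [DecidableEq A]

/-- Lemma 4.2 (deletion of overadjustment backdoor variables), discrete
form: under `Y ⊥ B₂ | (A, G₁, G₂)`, removing the backdoor covariates
`B₂` never increases the asymptotic variance of the WCDE influence
function. -/
theorem variance_deletion_backdoor
    (p : Y × A × G₁ × G₂ × B₂ → ℝ)
    (hpos : ∀ o, 0 < p o) (hsum : ∑ o, p o = 1) (a : A)
    (hCI : CI_Y_B2_AG1G2 p) :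
    VarP p (fun o => psi2 p a o.1 o.2.1 o.2.2.1 o.2.2.2.1 o.2.2.2.2) ≥
      VarP p (fun o => psi3 p a o.1 o.2.1 o.2.2.1 o.2.2.2.1) := by
  classical
  -- nonemptiness
  have hne : Nonempty (Y × A × G₁ × G₂ × B₂) := by
    by_contra h
    rw [not_nonempty_iff] at h
    rw [Finset.univ_eq_empty, Finset.sum_empty] at hsum
    exact one_ne_zero hsum.symm
  obtain ⟨⟨y0, a0, g10, g20, b20⟩⟩ := hne
  haveI : Nonempty Y := ⟨y0⟩
  haveI : Nonempty B₂ := ⟨b20⟩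
  -- positivity of the relevant marginals
  have hwpos : ∀ g₁ g₂ b₂, 0 < pAG1G2B2 p a g₁ g₂ b₂ := fun g₁ g₂ b₂ =>
    Finset.sum_pos (fun y _ => hpos _) Finset.univ_nonempty
  have hPpos : ∀ g₁ g₂, 0 < pAG1G2 p a g₁ g₂ := fun g₁ g₂ =>
    Finset.sum_pos (fun y _ => Finset.sum_pos (fun b _ => hpos _) Finset.univ_nonempty)
      Finset.univ_nonempty
  -- factorization from conditional independence
  have hfac : ∀ (y : Y) (g₁ : G₁) (g₂ : G₂) (b₂ : B₂),
      p (y, a, g₁, g₂, b₂) =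
        (∑ b₂' : B₂, p (y, a, g₁, g₂, b₂')) *
          (pAG1G2B2 p a g₁ g₂ b₂ / pAG1G2 p a g₁ g₂) := by
    intro y g₁ g₂ b₂
    have h := hCI y a g₁ g₂ b₂
    have hP : pAG1G2 p a g₁ g₂ ≠ 0 := (hPpos g₁ g₂).ne'
    calc p (y, a, g₁, g₂, b₂)
        = p (y, a, g₁, g₂, b₂) / pAG1G2 p a g₁ g₂ * pAG1G2 p a g₁ g₂ :=
          (div_mul_cancel₀ _ hP).symm
      _ = _ := by rw [h]; field_simp
  -- sum-swap identities
  have hsumG2B2 : ∀ g₂ : G₂, ∑ b₂ : B₂, pG2B2 p g₂ b₂ = pG2 p g₂ := by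
    intro g₂
    simp only [pG2B2, pG2]
    rw [Finset.sum_comm]
    refine Finset.sum_congr rfl fun y _ => ?_
    rw [Finset.sum_comm]
    refine Finset.sum_congr rfl fun a' _ => ?_
    rw [Finset.sum_comm]
  have hsumW : ∀ g₁ g₂, ∑ b₂ : B₂, pAG1G2B2 p a g₁ g₂ b₂ = pAG1G2 p a g₁ g₂ := by
    intro g₁ g₂
    simp only [pAG1G2B2, pAG1G2]
    rw [Finset.sum_comm]
  -- m2 = m3 under CI
  have hm2 : ∀ g₁ g₂ b₂, m2 p a g₁ g₂ b₂ = m3 p a g₁ g₂ := by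
    intro g₁ g₂ b₂
    have hw : pAG1G2B2 p a g₁ g₂ b₂ ≠ 0 := (hwpos g₁ g₂ b₂).ne'
    have hP : pAG1G2 p a g₁ g₂ ≠ 0 := (hPpos g₁ g₂).ne'
    rw [m2, m3]
    refine Finset.sum_congr rfl fun y _ => ?_
    rw [hfac y g₁ g₂ b₂]
    congr 1
    field_simp
  -- T2 = T3 under CI
  have hT : T2 p a = T3 p a := by
    rw [T2, T3]
    refine Finset.sum_congr rfl fun g₁ _ => ?_
    congr 1
    refine Finset.sum_congr rfl fun g₂ _ => ?_
    simp only [hm2]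
    rw [← Finset.sum_mul, hsumG2B2]
  -- first moment identity
  have hm3P : ∀ g₁ g₂,
      ∑ y : Y, (y : ℝ) * (∑ b₂ : B₂, p (y, a, g₁, g₂, b₂)) =
        m3 p a g₁ g₂ * pAG1G2 p a g₁ g₂ := by
    intro g₁ g₂
    have hP : pAG1G2 p a g₁ g₂ ≠ 0 := (hPpos g₁ g₂).ne'
    rw [m3, Finset.sum_mul]
    refine Finset.sum_congr rfl fun y _ => ?_
    rw [mul_assoc, div_mul_cancel₀ _ hP]
  -- conditional mean of (y - m3) is zero
  have hS1 : ∀ g₁ g₂ b₂,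
      ∑ y : Y, p (y, a, g₁, g₂, b₂) * ((y : ℝ) - m3 p a g₁ g₂) = 0 := by
    intro g₁ g₂ b₂
    calc ∑ y : Y, p (y, a, g₁, g₂, b₂) * ((y : ℝ) - m3 p a g₁ g₂)
        = (∑ y : Y, ((y : ℝ) * (∑ b₂' : B₂, p (y, a, g₁, g₂, b₂')) -
            (∑ b₂' : B₂, p (y, a, g₁, g₂, b₂')) * m3 p a g₁ g₂)) *
            (pAG1G2B2 p a g₁ g₂ b₂ / pAG1G2 p a g₁ g₂) := by
          rw [Finset.sum_mul]
          refine Finset.sum_congr rfl fun y _ => ?_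
          rw [hfac y g₁ g₂ b₂]; ring
      _ = 0 := by
          rw [Finset.sum_sub_distrib, hm3P, ← Finset.sum_mul,
            show (∑ y : Y, ∑ b₂' : B₂, p (y, a, g₁, g₂, b₂')) = pAG1G2 p a g₁ g₂ from rfl]
          ring
  -- conditional second moment factorization
  have hS2 : ∀ g₁ g₂ b₂,
      ∑ y : Y, p (y, a, g₁, g₂, b₂) * ((y : ℝ) - m3 p a g₁ g₂) ^ 2 =
        pAG1G2B2 p a g₁ g₂ b₂ / pAG1G2 p a g₁ g₂ *
          ∑ y : Y, (∑ b₂' : B₂, p (y, a, g₁, g₂, b₂')) * ((y : ℝ) - m3 p a g₁ g₂) ^ 2 := by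
    intro g₁ g₂ b₂
    rw [Finset.mul_sum]
    refine Finset.sum_congr rfl fun y _ => ?_
    rw [hfac y g₁ g₂ b₂]; ring
  -- decomposition of psi2
  have hpsi : ∀ (y : Y) (a' : A) (g₁ : G₁) (g₂ : G₂) (b₂ : B₂),
      psi2 p a y a' g₁ g₂ b₂ = psi3 p a y a' g₁ g₂ +
        (if a' = a then (1 : ℝ) else 0) * pG1 p g₁ *
          (pG2B2 p g₂ b₂ / pAG1G2B2 p a g₁ g₂ b₂ - pG2 p g₂ / pAG1G2 p a g₁ g₂) *
          ((y : ℝ) - m3 p a g₁ g₂) := by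
    intro y a' g₁ g₂ b₂
    rw [psi2, psi3, hT]
    simp only [hm2]
    have h1 : (∑ g₂' : G₂, ∑ b₂' : B₂, pG2B2 p g₂' b₂' * m3 p a g₁ g₂') =
        ∑ g₂' : G₂, pG2 p g₂' * m3 p a g₁ g₂' :=
      Finset.sum_congr rfl fun g₂' _ => by rw [← Finset.sum_mul, hsumG2B2]
    rw [h1]
    ring
  -- decomposition of psi3
  have hpsi3 : ∀ (y : Y) (a' : A) (g₁ : G₁) (g₂ : G₂),
      psi3 p a y a' g₁ g₂ =
        (if a' = a then (1 : ℝ) else 0) * (pG1 p g₁ * pG2 p g₂ / pAG1G2 p a g₁ g₂) *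
          ((y : ℝ) - m3 p a g₁ g₂) +
        ((∑ g₂' : G₂, pG2 p g₂' * m3 p a g₁ g₂') +
          (∑ g₁' : G₁, pG1 p g₁' * m3 p a g₁' g₂) - 2 * T3 p a) := by
    intro y a' g₁ g₂
    rw [psi3]
    ring
  -- key identity for the second moments
  have key : ∀ (a' : A) (g₁ : G₁) (g₂ : G₂) (b₂ : B₂),
      ∑ y : Y, p (y, a', g₁, g₂, b₂) *
          (psi2 p a y a' g₁ g₂ b₂ ^ 2 - psi3 p a y a' g₁ g₂ ^ 2) =
        if a' = a then
          pG1 p g₁ ^ 2 *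
            ((pG2B2 p g₂ b₂ / pAG1G2B2 p a g₁ g₂ b₂) ^ 2 -
              (pG2 p g₂ / pAG1G2 p a g₁ g₂) ^ 2) *
            (pAG1G2B2 p a g₁ g₂ b₂ / pAG1G2 p a g₁ g₂ *
              ∑ y : Y, (∑ b₂' : B₂, p (y, a, g₁, g₂, b₂')) * ((y : ℝ) - m3 p a g₁ g₂) ^ 2)
        else 0 := by
    intro a' g₁ g₂ b₂
    by_cases ha' : a' = a
    · subst ha'
      have hptw : ∀ y : Y, p (y, a', g₁, g₂, b₂) *
          (psi2 p a' y a' g₁ g₂ b₂ ^ 2 - psi3 p a' y a' g₁ g₂ ^ 2) =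
          (pG1 p g₁ ^ 2 *
            ((pG2B2 p g₂ b₂ / pAG1G2B2 p a' g₁ g₂ b₂) ^ 2 -
              (pG2 p g₂ / pAG1G2 p a' g₁ g₂) ^ 2)) *
            (p (y, a', g₁, g₂, b₂) * ((y : ℝ) - m3 p a' g₁ g₂) ^ 2) +
          (2 * ((∑ g₂' : G₂, pG2 p g₂' * m3 p a' g₁ g₂') +
            (∑ g₁' : G₁, pG1 p g₁' * m3 p a' g₁' g₂) - 2 * T3 p a') *
            (pG1 p g₁ *
              (pG2B2 p g₂ b₂ / pAG1G2B2 p a' g₁ g₂ b₂ - pG2 p g₂ / pAG1G2 p a' g₁ g₂))) *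
            (p (y, a', g₁, g₂, b₂) * ((y : ℝ) - m3 p a' g₁ g₂)) := by
        intro y
        rw [hpsi y a' g₁ g₂ b₂, hpsi3 y a' g₁ g₂]
        simp only [eq_self_iff_true, if_true]
        ring
      rw [Finset.sum_congr rfl fun y _ => hptw y, Finset.sum_add_distrib,
        ← Finset.mul_sum, ← Finset.mul_sum, hS1, hS2, if_pos rfl, mul_zero, add_zero]
    · have hps : ∀ y : Y, psi2 p a y a' g₁ g₂ b₂ = psi3 p a y a' g₁ g₂ := fun y => by
        rw [hpsi y a' g₁ g₂ b₂, if_neg ha']; ring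
      simp [hps, ha']
  -- key identity for the first moments
  have key0 : ∀ (a' : A) (g₁ : G₁) (g₂ : G₂) (b₂ : B₂),
      ∑ y : Y, p (y, a', g₁, g₂, b₂) *
          (psi2 p a y a' g₁ g₂ b₂ - psi3 p a y a' g₁ g₂) = 0 := by
    intro a' g₁ g₂ b₂
    have hc : ∀ y : Y, p (y, a', g₁, g₂, b₂) *
        (psi2 p a y a' g₁ g₂ b₂ - psi3 p a y a' g₁ g₂) =
        ((if a' = a then (1 : ℝ) else 0) * pG1 p g₁ *
          (pG2B2 p g₂ b₂ / pAG1G2B2 p a g₁ g₂ b₂ - pG2 p g₂ / pAG1G2 p a g₁ g₂)) *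
          (p (y, a', g₁, g₂, b₂) * ((y : ℝ) - m3 p a g₁ g₂)) := fun y => by
      rw [hpsi y a' g₁ g₂ b₂]; ring
    rw [Finset.sum_congr rfl fun y _ => hc y, ← Finset.mul_sum]
    by_cases ha' : a' = a
    · subst ha'; rw [hS1, mul_zero]
    · simp [ha']
  -- splitting a sum over the product type
  have hsplit : ∀ F : Y × A × G₁ × G₂ × B₂ → ℝ,
      ∑ o : Y × A × G₁ × G₂ × B₂, F o =
        ∑ a' : A, ∑ g₁ : G₁, ∑ g₂ : G₂, ∑ b₂ : B₂, ∑ y : Y, F (y, a', g₁, g₂, b₂) := by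
    intro F
    rw [Fintype.sum_prod_type]
    simp_rw [Fintype.sum_prod_type]
    rw [Finset.sum_comm]
    refine Finset.sum_congr rfl fun a' _ => ?_
    rw [Finset.sum_comm]
    refine Finset.sum_congr rfl fun g₁ _ => ?_
    rw [Finset.sum_comm]
    refine Finset.sum_congr rfl fun g₂ _ => ?_
    rw [Finset.sum_comm]
  -- the two means agree
  have hE : (∑ a' : A, ∑ g₁ : G₁, ∑ g₂ : G₂, ∑ b₂ : B₂, ∑ y : Y,
        p (y, a', g₁, g₂, b₂) * psi2 p a y a' g₁ g₂ b₂) =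
      ∑ a' : A, ∑ g₁ : G₁, ∑ g₂ : G₂, ∑ b₂ : B₂, ∑ y : Y,
        p (y, a', g₁, g₂, b₂) * psi3 p a y a' g₁ g₂ := by
    refine Finset.sum_congr rfl fun a' _ => Finset.sum_congr rfl fun g₁ _ =>
      Finset.sum_congr rfl fun g₂ _ => Finset.sum_congr rfl fun b₂ _ => ?_
    have h1 : (∑ y : Y, (p (y, a', g₁, g₂, b₂) * psi2 p a y a' g₁ g₂ b₂ -
        p (y, a', g₁, g₂, b₂) * psi3 p a y a' g₁ g₂)) = 0 := by
      rw [← key0 a' g₁ g₂ b₂]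
      exact Finset.sum_congr rfl fun y _ => (mul_sub _ _ _).symm
    rw [Finset.sum_sub_distrib] at h1
    linarith
  -- the second moments are ordered
  have hQlevel : ∀ (a' : A) (g₁ : G₁) (g₂ : G₂),
      (∑ b₂ : B₂, ∑ y : Y, p (y, a', g₁, g₂, b₂) * psi3 p a y a' g₁ g₂ ^ 2) ≤
        ∑ b₂ : B₂, ∑ y : Y, p (y, a', g₁, g₂, b₂) * psi2 p a y a' g₁ g₂ b₂ ^ 2 := by
    intro a' g₁ g₂
    rw [← sub_nonneg, ← Finset.sum_sub_distrib]
    have hc : ∀ b₂ ∈ (Finset.univ : Finset B₂),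
        ((∑ y : Y, p (y, a', g₁, g₂, b₂) * psi2 p a y a' g₁ g₂ b₂ ^ 2) -
          ∑ y : Y, p (y, a', g₁, g₂, b₂) * psi3 p a y a' g₁ g₂ ^ 2) =
        ∑ y : Y, p (y, a', g₁, g₂, b₂) *
          (psi2 p a y a' g₁ g₂ b₂ ^ 2 - psi3 p a y a' g₁ g₂ ^ 2) := fun b₂ _ => by
      rw [← Finset.sum_sub_distrib]
      exact Finset.sum_congr rfl fun y _ => (mul_sub _ _ _).symm
    rw [Finset.sum_congr rfl hc, Finset.sum_congr rfl fun b₂ _ => key a' g₁ g₂ b₂]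
    by_cases ha' : a' = a
    · subst ha'
      simp only [eq_self_iff_true, if_true]
      set Wv := ∑ y : Y, (∑ b₂' : B₂, p (y, a', g₁, g₂, b₂')) *
        ((y : ℝ) - m3 p a' g₁ g₂) ^ 2 with hWv
      have hWnn : 0 ≤ Wv :=
        Finset.sum_nonneg fun y _ => mul_nonneg
          (Finset.sum_nonneg fun b' _ => (hpos _).le) (sq_nonneg _)
      have hterm : ∀ b₂ : B₂,
          pG1 p g₁ ^ 2 * ((pG2B2 p g₂ b₂ / pAG1G2B2 p a' g₁ g₂ b₂) ^ 2 -
            (pG2 p g₂ / pAG1G2 p a' g₁ g₂) ^ 2) *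
            (pAG1G2B2 p a' g₁ g₂ b₂ / pAG1G2 p a' g₁ g₂ * Wv) =
          pG1 p g₁ ^ 2 * Wv / pAG1G2 p a' g₁ g₂ *
            (pG2B2 p g₂ b₂ ^ 2 / pAG1G2B2 p a' g₁ g₂ b₂ -
              (pG2 p g₂ / pAG1G2 p a' g₁ g₂) ^ 2 * pAG1G2B2 p a' g₁ g₂ b₂) := by
        intro b₂
        have hw : pAG1G2B2 p a' g₁ g₂ b₂ ≠ 0 := (hwpos g₁ g₂ b₂).ne'
        have hP : pAG1G2 p a' g₁ g₂ ≠ 0 := (hPpos g₁ g₂).ne'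
        field_simp
      rw [Finset.sum_congr rfl fun b₂ _ => hterm b₂, ← Finset.mul_sum,
        Finset.sum_sub_distrib, ← Finset.mul_sum, hsumW]
      apply mul_nonneg
      · exact div_nonneg (mul_nonneg (sq_nonneg _) hWnn) (hPpos g₁ g₂).le
      · rw [sub_nonneg]
        have hsed : (pG2 p g₂) ^ 2 / pAG1G2 p a' g₁ g₂ ≤
            ∑ b₂ : B₂, pG2B2 p g₂ b₂ ^ 2 / pAG1G2B2 p a' g₁ g₂ b₂ := by
          have h := Finset.sq_sum_div_le_sum_sq_div (Finset.univ : Finset B₂)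
            (fun b₂ => pG2B2 p g₂ b₂) (g := fun b₂ => pAG1G2B2 p a' g₁ g₂ b₂)
            (fun b₂ _ => hwpos g₁ g₂ b₂)
          rwa [hsumG2B2, hsumW] at h
        have hPeq : (pG2 p g₂ / pAG1G2 p a' g₁ g₂) ^ 2 * pAG1G2 p a' g₁ g₂ =
            (pG2 p g₂) ^ 2 / pAG1G2 p a' g₁ g₂ := by
          have hP : pAG1G2 p a' g₁ g₂ ≠ 0 := (hPpos g₁ g₂).ne'
          field_simp
        rw [hPeq]
        exact hsed
    · simp [ha']
  -- assemble
  have hVar2 : VarP p (fun o => psi2 p a o.1 o.2.1 o.2.2.1 o.2.2.2.1 o.2.2.2.2) =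
      (∑ a' : A, ∑ g₁ : G₁, ∑ g₂ : G₂, ∑ b₂ : B₂, ∑ y : Y,
        p (y, a', g₁, g₂, b₂) * psi2 p a y a' g₁ g₂ b₂ ^ 2) -
      (∑ a' : A, ∑ g₁ : G₁, ∑ g₂ : G₂, ∑ b₂ : B₂, ∑ y : Y,
        p (y, a', g₁, g₂, b₂) * psi2 p a y a' g₁ g₂ b₂) ^ 2 := by
    unfold VarP
    congr 1
    · exact hsplit _
    · rw [hsplit (fun o => p o * psi2 p a o.1 o.2.1 o.2.2.1 o.2.2.2.1 o.2.2.2.2)]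
  have hVar3 : VarP p (fun o => psi3 p a o.1 o.2.1 o.2.2.1 o.2.2.2.1) =
      (∑ a' : A, ∑ g₁ : G₁, ∑ g₂ : G₂, ∑ b₂ : B₂, ∑ y : Y,
        p (y, a', g₁, g₂, b₂) * psi3 p a y a' g₁ g₂ ^ 2) -
      (∑ a' : A, ∑ g₁ : G₁, ∑ g₂ : G₂, ∑ b₂ : B₂, ∑ y : Y,
        p (y, a', g₁, g₂, b₂) * psi3 p a y a' g₁ g₂) ^ 2 := by
    unfold VarP
    congr 1
    · exact hsplit _
    · rw [hsplit (fun o => p o * psi3 p a o.1 o.2.1 o.2.2.1 o.2.2.2.1)]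
  rw [ge_iff_le, hVar2, hVar3, ← hE]
  refine sub_le_sub ?_ le_rfl
  exact Finset.sum_le_sum fun a' _ => Finset.sum_le_sum fun g₁ _ =>
    Finset.sum_le_sum fun g₂ _ => hQlevel a' g₁ g₂

end
end
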